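/- Let a_0, a_1, a_2 be nonnegative integers with a_2 − a_1 ≤ a_0 ≤ a_1 + a_2, a_1 ≤ a_0 + a_2, and a_0 − a_1 + a_2 even. Then the unique maximizer of d(r_1, r_2) = r_1(a_0 + a_1) + r_2(a_1 + a_2) − r_1² − r_2² − r_1 r_2 over {(r_1, r_2) ∈ ℤ_{≥0}² : r_1 ≤ a_0, r_2 ≤ a_2, r_1 + r_2 ≤ a_1} is (r_1, r_2) = ((a_0 + a_1 − a_2)/2, (−a_0 + a_1 + a_2)/2), giving Betti numbers (χ/2, 0, χ/2) where χ = a_0 − a_1 + a_2. -/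
import Mathlib
set_option maxHeartbeats 800000


/-- The dimension of the variety of length-2 chain complexes with ranks `(r₁, r₂)`. -/
def d2 (a₀ a₁ a₂ : ℕ) (r : ℤ × ℤ) : ℤ :=
  r.1 * (a₀ + a₁) + r.2 * (a₁ + a₂) - r.1 ^ 2 - r.2 ^ 2 - r.1 * r.2

/-- Feasibility of the rank vector `(r₁, r₂)`. -/
def feas2 (a₀ a₁ a₂ : ℕ) (r : ℤ × ℤ) : Prop :=
  0 ≤ r.1 ∧ 0 ≤ r.2 ∧ r.1 ≤ a₀ ∧ r.2 ≤ a₂ ∧ r.1 + r.2 ≤ a₁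

/-- If `a₂ - a₁ ≤ a₀ ≤ a₁ + a₂`, `a₁ ≤ a₀ + a₂` and `χ = a₀ - a₁ + a₂` is even, then
the unique maximizer of `d2` over the feasible region is
`((a₀ + a₁ - a₂)/2, (-a₀ + a₁ + a₂)/2)`, giving Betti numbers `(χ/2, 0, χ/2)`. -/
theorem stmt7 (a₀ a₁ a₂ : ℕ) (h₁ : (a₂ : ℤ) - a₁ ≤ a₀) (h₂ : a₀ ≤ a₁ + a₂)
    (h₃ : a₁ ≤ a₀ + a₂) (h₄ : Even ((a₀ : ℤ) - a₁ + a₂)) :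
    feas2 a₀ a₁ a₂ (((a₀ : ℤ) + a₁ - a₂) / 2, ((a₁ : ℤ) + a₂ - a₀) / 2) ∧
    (∀ r : ℤ × ℤ, feas2 a₀ a₁ a₂ r →
      d2 a₀ a₁ a₂ r ≤ d2 a₀ a₁ a₂ (((a₀ : ℤ) + a₁ - a₂) / 2, ((a₁ : ℤ) + a₂ - a₀) / 2)) ∧
    (∀ r : ℤ × ℤ, feas2 a₀ a₁ a₂ r →
      (∀ s : ℤ × ℤ, feas2 a₀ a₁ a₂ s → d2 a₀ a₁ a₂ s ≤ d2 a₀ a₁ a₂ r) →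
      r = (((a₀ : ℤ) + a₁ - a₂) / 2, ((a₁ : ℤ) + a₂ - a₀) / 2)) ∧
    ((a₀ : ℤ) - ((a₀ : ℤ) + a₁ - a₂) / 2 = ((a₀ : ℤ) - a₁ + a₂) / 2 ∧
     (a₁ : ℤ) - ((a₀ : ℤ) + a₁ - a₂) / 2 - ((a₁ : ℤ) + a₂ - a₀) / 2 = 0 ∧
     (a₂ : ℤ) - ((a₁ : ℤ) + a₂ - a₀) / 2 = ((a₀ : ℤ) - a₁ + a₂) / 2) := by
  obtain ⟨k, hk⟩ := h₄
  have hp : ((a₀ : ℤ) + a₁ - a₂) / 2 = (a₁ : ℤ) - a₂ + k := by omega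
  have hq : ((a₁ : ℤ) + a₂ - a₀) / 2 = (a₂ : ℤ) - k := by omega
  have hk0 : 0 ≤ k := by omega
  have hmax : ∀ r : ℤ × ℤ, feas2 a₀ a₁ a₂ r →
      d2 a₀ a₁ a₂ r ≤ d2 a₀ a₁ a₂ (((a₀ : ℤ) + a₁ - a₂) / 2, ((a₁ : ℤ) + a₂ - a₀) / 2) := by
    intro r hr
    obtain ⟨hr1, hr2, hr3, hr4, hr5⟩ := hr
    simp only [d2, hp, hq]
    nlinarith [sq_nonneg (r.1 - ((a₁ : ℤ) - a₂ + k)), sq_nonneg (r.2 - ((a₂ : ℤ) - k)),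
      sq_nonneg (r.1 + r.2 - (a₁ : ℤ)),
      mul_nonneg hk0 (by linarith : (0:ℤ) ≤ (a₁ : ℤ) - r.1 - r.2)]
  refine ⟨⟨?_, ?_, ?_, ?_, ?_⟩, hmax, ?_, by omega, by omega, by omega⟩
  · omega
  · omega
  · omega
  · omega
  · omega
  · intro r hr hbest
    have h5 := hbest (((a₀ : ℤ) + a₁ - a₂) / 2, ((a₁ : ℤ) + a₂ - a₀) / 2)
      ⟨by omega, by omega, by omega, by omega, by omega⟩
    obtain ⟨hr1, hr2, hr3, hr4, hr5⟩ := hr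
    simp only [d2, hp, hq] at h5
    clear hbest hmax
    have key : (r.1 - ((a₁:ℤ) - a₂ + k)) ^ 2 + (r.2 - ((a₂:ℤ) - k)) ^ 2
        + (r.1 - ((a₁:ℤ) - a₂ + k)) * (r.2 - ((a₂:ℤ) - k)) ≤ 0 := by
      nlinarith [mul_nonneg hk0 (by linarith : (0:ℤ) ≤ (a₁ : ℤ) - r.1 - r.2)]
    have hx0 : r.1 - ((a₁:ℤ) - a₂ + k) = 0 := by
      nlinarith [sq_nonneg (r.1 - ((a₁:ℤ) - a₂ + k) + (r.2 - ((a₂:ℤ) - k))),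
        sq_nonneg (r.2 - ((a₂:ℤ) - k)), sq_nonneg (r.1 - ((a₁:ℤ) - a₂ + k))]
    have hy0 : r.2 - ((a₂:ℤ) - k) = 0 := by
      nlinarith [sq_nonneg (r.1 - ((a₁:ℤ) - a₂ + k) + (r.2 - ((a₂:ℤ) - k))),
        sq_nonneg (r.1 - ((a₁:ℤ) - a₂ + k)), sq_nonneg (r.2 - ((a₂:ℤ) - k))]
    exact Prod.ext (by omega) (by omega)
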